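/- Let X2− ∈ ℝ^{n×τ} have full row rank and let F ∈ ℝ^{n×τ}. If X2− has a right inverse X2−† such that F·X2−† is stable, then there exists Θ ∈ ℝ^{τ×n} with X2−·Θ symmetric, the block matrix [[X2−·Θ, F·Θ],[Θᵀ·Fᵀ, X2−·Θ]] positive definite, and X2−† relates to Θ via F·(Θ·(X2−·Θ)⁻¹) being stable. -/

import Mathlib

open Matrix Filter
open scoped ENNReal NNReal

open scoped Matrix.Norms.L2Operator in
lemma pow_norm_lt_one {n : ℕ} (M : Matrix (Fin n) (Fin n) ℂ)
    (h : ∀ μ ∈ spectrum ℂ M, ‖μ‖ < 1) :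
    ∃ k : ℕ, 0 < k ∧ ‖M ^ k‖ < 1 := by
  have hfin : (spectrum ℂ M).Finite := Matrix.finite_spectrum M
  have hrad : spectralRadius ℂ M < 1 := by
    have hle : spectralRadius ℂ M ≤ hfin.toFinset.sup (fun μ => (‖μ‖₊ : ℝ≥0∞)) := by
      rw [spectralRadius]
      exact iSup₂_le fun μ hμ =>
        Finset.le_sup (f := fun μ : ℂ => (‖μ‖₊ : ℝ≥0∞)) (hfin.mem_toFinset.mpr hμ)
    refine hle.trans_lt ?_
    rw [Finset.sup_lt_iff (by norm_num : (⊥ : ℝ≥0∞) < 1)]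
    intro μ hμ
    have h2 := h μ (hfin.mem_toFinset.mp hμ)
    exact_mod_cast (by exact_mod_cast h2 : (‖μ‖₊ : ℝ≥0) < 1)
  have htend := spectrum.pow_nnnorm_pow_one_div_tendsto_nhds_spectralRadius M
  have hev : ∀ᶠ k : ℕ in atTop, (‖M ^ k‖₊ : ℝ≥0∞) ^ (1 / (k:ℝ)) < 1 :=
    htend.eventually_lt_const hrad
  obtain ⟨k, hk, hk1⟩ := (hev.and (eventually_ge_atTop 1)).exists
  refine ⟨k, hk1, ?_⟩
  by_contra hge
  push_neg at hge
  have h1 : (1:ℝ≥0∞) ≤ (‖M ^ k‖₊ : ℝ≥0∞) := by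
    exact_mod_cast (by exact_mod_cast hge : (1:ℝ≥0) ≤ ‖M ^ k‖₊)
  exact absurd (ENNReal.one_le_rpow h1 (by positivity)) (not_le.mpr hk)

open scoped Matrix.Norms.L2Operator in
lemma posDef_one_sub_mul_transpose {n : ℕ} (B : Matrix (Fin n) (Fin n) ℝ)
    (h : ‖B.map (algebraMap ℝ ℂ)‖ < 1) : (1 - B * Bᵀ).PosDef := by
  rw [Matrix.posDef_iff_dotProduct_mulVec]
  constructor
  · have h1 : (B * Bᵀ).IsHermitian := by
      have := isHermitian_mul_conjTranspose_self B
      rwa [conjTranspose_eq_transpose_of_trivial] at this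
    exact (isHermitian_one).sub h1
  · intro x hx
    set C := B.map (algebraMap ℝ ℂ) with hC
    have hCH : Cᴴ = Bᵀ.map (algebraMap ℝ ℂ) := by
      ext i j
      simp [hC, conjTranspose_apply, Matrix.map_apply, Complex.conj_ofReal]
    set z : EuclideanSpace ℂ (Fin n) :=
      (EuclideanSpace.equiv (Fin n) ℂ).symm (fun i => (x i : ℂ)) with hz
    have hbound := Cᴴ.l2_opNorm_mulVec z
    rw [Matrix.l2_opNorm_conjTranspose] at hbound
    -- identify entries
    have hentry : ∀ i, (Cᴴ *ᵥ (z : Fin n → ℂ)) i = ((Bᵀ *ᵥ x) i : ℂ) := by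
      intro i
      simp only [hCH, Matrix.mulVec, dotProduct, Matrix.map_apply]
      push_cast
      rfl
    have hs1 : ‖(EuclideanSpace.equiv (Fin n) ℂ).symm (Cᴴ *ᵥ z)‖ ^ 2
        = (Bᵀ *ᵥ x) ⬝ᵥ (Bᵀ *ᵥ x) := by
      rw [EuclideanSpace.norm_eq, Real.sq_sqrt (by positivity)]
      simp only [dotProduct]
      congr 1; ext i
      rw [show ((EuclideanSpace.equiv (Fin n) ℂ).symm (Cᴴ *ᵥ z) : Fin n → ℂ) i
          = (Cᴴ *ᵥ (z : Fin n → ℂ)) i from rfl, hentry i]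
      simp [← sq]
    have hs2 : ‖z‖ ^ 2 = x ⬝ᵥ x := by
      rw [EuclideanSpace.norm_eq, Real.sq_sqrt (by positivity)]
      simp only [dotProduct]
      congr 1; ext i
      rw [show (z : Fin n → ℂ) i = (x i : ℂ) from rfl]
      simp [← sq]
    have hxx : 0 < x ⬝ᵥ x := by
      have := Matrix.dotProduct_star_self_pos_iff (v := x) |>.mpr hx
      simpa using this
    have hznorm : 0 < ‖z‖ := by
      have h2 : (0:ℝ) < ‖z‖ ^ 2 := hs2 ▸ hxx
      nlinarith [norm_nonneg z]
    have hlt : ‖(EuclideanSpace.equiv (Fin n) ℂ).symm (Cᴴ *ᵥ z)‖ < ‖z‖ :=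
      lt_of_le_of_lt hbound (by nlinarith [norm_nonneg C])
    have hkey : (Bᵀ *ᵥ x) ⬝ᵥ (Bᵀ *ᵥ x) < x ⬝ᵥ x := by
      rw [← hs1, ← hs2]
      have h0 := norm_nonneg ((EuclideanSpace.equiv (Fin n) ℂ).symm (Cᴴ *ᵥ z))
      nlinarith
    have hform : star x ⬝ᵥ ((1 - B * Bᵀ) *ᵥ x) = x ⬝ᵥ x - (Bᵀ *ᵥ x) ⬝ᵥ (Bᵀ *ᵥ x) := by
      rw [star_trivial, sub_mulVec, dotProduct_sub, one_mulVec, ← Matrix.mulVec_mulVec,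
        dotProduct_mulVec, ← mulVec_transpose]
    rw [hform]
    linarith

lemma posDef_fromBlocks22 {m : Type*} [Fintype m] [DecidableEq m]
    {A : Matrix m m ℝ} (B : Matrix m m ℝ) {D : Matrix m m ℝ} (hD : D.PosDef)
    (hS : (A - B * D⁻¹ * Bᴴ).PosDef) :
    (Matrix.fromBlocks A B Bᴴ D).PosDef := by
  haveI : Invertible D := hD.isUnit.invertible
  rw [Matrix.posDef_iff_dotProduct_mulVec]
  constructor
  · exact (Matrix.IsHermitian.fromBlocks₂₂ A B hD.1).mpr hS.1
  · intro v hv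
    have hv' : (v ∘ Sum.inl) ⊕ᵥ (v ∘ Sum.inr) = v := Sum.elim_comp_inl_inr v
    set x := v ∘ Sum.inl with hx
    set y := v ∘ Sum.inr with hy
    rw [dotProduct_mulVec, ← hv', Matrix.schur_complement_eq₂₂ A B x y hD.1]
    rcases eq_or_ne x 0 with h0 | h0
    · have hy0 : y ≠ 0 := by
        intro hc
        apply hv
        rw [← hv', h0, hc]
        ext (i | i) <;> simp
      have : (D⁻¹ * Bᴴ) *ᵥ x + y = y := by rw [h0, Matrix.mulVec_zero, zero_add]
      rw [this, h0]
      have h1 : 0 < star y ⬝ᵥ D *ᵥ y := hD.dotProduct_mulVec_pos hy0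
      rw [dotProduct_mulVec] at h1
      simp only [star_zero, Matrix.zero_vecMul, zero_dotProduct, add_zero]
      exact h1
    · have h1 : 0 < star x ⬝ᵥ (A - B * D⁻¹ * Bᴴ) *ᵥ x := hS.dotProduct_mulVec_pos h0
      rw [dotProduct_mulVec] at h1
      have h2 : 0 ≤ star ((D⁻¹ * Bᴴ) *ᵥ x + y) ⬝ᵥ D *ᵥ ((D⁻¹ * Bᴴ) *ᵥ x + y) :=
        hD.posSemidef.dotProduct_mulVec_nonneg _
      rw [dotProduct_mulVec] at h2
      linarith

def IsStable {n : Type*} [Fintype n] [DecidableEq n] (M : Matrix n n ℝ) : Prop :=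
  ∀ μ ∈ spectrum ℂ (M.map (algebraMap ℝ ℂ)), ‖μ‖ < 1

theorem stmt12 {n τ : ℕ}
    (X2m F : Matrix (Fin n) (Fin τ) ℝ)
    (hrank : X2m.rank = n)
    (Xd : Matrix (Fin τ) (Fin n) ℝ) (hXd : X2m * Xd = 1)
    (hstab : IsStable (F * Xd)) :
    ∃ Θ : Matrix (Fin τ) (Fin n) ℝ,
      (X2m * Θ)ᵀ = X2m * Θ ∧
      (Matrix.fromBlocks (X2m * Θ) (F * Θ) (Θᵀ * Fᵀ) (X2m * Θ)).PosDef ∧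
      IsStable (F * (Θ * (X2m * Θ)⁻¹)) := by
  set A : Matrix (Fin n) (Fin n) ℝ := F * Xd with hA
  obtain ⟨k, hk0, hk⟩ := pow_norm_lt_one (A.map (algebraMap ℝ ℂ)) hstab
  have hmap : (A.map (algebraMap ℝ ℂ)) ^ k = (A ^ k).map (algebraMap ℝ ℂ) := by
    have := map_pow ((algebraMap ℝ ℂ).mapMatrix) A k
    simpa [RingHom.mapMatrix_apply] using this.symm
  rw [hmap] at hk
  have hBB : (1 - (A ^ k) * (A ^ k)ᵀ).PosDef := posDef_one_sub_mul_transpose (A ^ k) hk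
  set f : ℕ → Matrix (Fin n) (Fin n) ℝ := fun j => A ^ j * (A ^ j)ᵀ with hf
  set P : Matrix (Fin n) (Fin n) ℝ := ∑ j ∈ Finset.range k, f j with hP
  have hfsd : ∀ j, (f j).PosSemidef := fun j => by
    have := Matrix.posSemidef_self_mul_conjTranspose (A ^ j)
    rwa [conjTranspose_eq_transpose_of_trivial] at this
  have hPsym : Pᵀ = P := by
    simp only [hP, Matrix.transpose_sum, hf, Matrix.transpose_mul, Matrix.transpose_transpose]
  have hPpd : P.PosDef := by
    obtain ⟨m, rfl⟩ := Nat.exists_eq_succ_of_ne_zero hk0.ne'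
    rw [hP, Finset.sum_range_succ']
    have hsum : (∑ j ∈ Finset.range m, f (j + 1)).PosSemidef := by
      refine Finset.sum_induction _ _ (fun a b ha hb => ha.add hb) ?_ ?_
      · exact Matrix.PosSemidef.zero
      · exact fun j _ => hfsd (j + 1)
    have hf0 : f 0 = 1 := by simp [hf]
    rw [hf0]
    exact Matrix.PosDef.posSemidef_add hsum Matrix.PosDef.one
  have hPdet : IsUnit P.det := (Matrix.isUnit_iff_isUnit_det P).mp hPpd.isUnit
  have hPinv : P * P⁻¹ = 1 := Matrix.mul_nonsing_inv P hPdet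
  have hLyap : P - A * P * Aᵀ = 1 - (A ^ k) * (A ^ k)ᵀ := by
    have h1 : A * P * Aᵀ = ∑ j ∈ Finset.range k, f (j + 1) := by
      rw [hP, Finset.mul_sum, Finset.sum_mul]
      refine Finset.sum_congr rfl fun j _ => ?_
      simp only [hf, pow_succ', Matrix.transpose_mul, hA, Matrix.mul_assoc]
    rw [h1, hP, ← Finset.sum_sub_distrib, Finset.sum_range_sub' f k]
    simp [hf]
  have hSchur : (1 - (A ^ k) * (A ^ k)ᵀ).PosDef := hBB
  refine ⟨Xd * P, ?_, ?_, ?_⟩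
  all_goals have hXΘ : X2m * (Xd * P) = P := by rw [← Matrix.mul_assoc, hXd, Matrix.one_mul]
  · rw [hXΘ]; exact hPsym
  · rw [hXΘ]
    have hFΘ : F * (Xd * P) = A * P := by rw [hA, Matrix.mul_assoc]
    have hΘF : (Xd * P)ᵀ * Fᵀ = (A * P)ᴴ := by
      rw [conjTranspose_eq_transpose_of_trivial, ← Matrix.transpose_mul, hFΘ]
    rw [hFΘ, hΘF]
    refine posDef_fromBlocks22 (A * P) hPpd ?_
    have : A * P * P⁻¹ * (A * P)ᴴ = A * P * Aᵀ := by
      rw [conjTranspose_eq_transpose_of_trivial, Matrix.transpose_mul, hPsym,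
        Matrix.mul_assoc A P P⁻¹, hPinv, Matrix.mul_one]
      simp only [hA, Matrix.mul_assoc]
    rw [this, hLyap]
    exact hSchur
  · rw [hXΘ]
    have : Xd * P * P⁻¹ = Xd := by rw [Matrix.mul_assoc, hPinv, Matrix.mul_one]
    rw [this]
    exact hstab
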